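/- arXiv:2208.06072 — 2 statements merged into one kernel-verified Lean document; each statement's English description precedes it below -/
import Mathlib

section
/- Let N and M be positive integers, let G be a random N × M complex matrix and h a random vector in ℂ^N, with G and h independent, and with all entries of G and of h mutually independent and each distributed as a standard circularly-symmetric complex Gaussian CN(0,1). Then E[‖Gᵀ h‖⁴] = (M² + M)(N² + N), where (Gᵀ h)_m = Σ_{n=1}^N G_{n m} h_n. -/
open MeasureTheory ProbabilityTheory Matrix

/-- The law of a standard circularly-symmetric complex Gaussian `CN(0,1)`:
the pushforward of the product of two real Gaussians `N(0, 1/2)` under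
`(x, y) ↦ x + i y`. -/
noncomputable def stdComplexGaussian : Measure ℂ :=
  ((gaussianReal 0 (1/2)).prod (gaussianReal 0 (1/2))).map
    (fun p => (p.1 : ℂ) + (p.2 : ℂ) * Complex.I)

section CGaux
open Real Filter Complex
open scoped NNReal ENNReal

namespace CG

lemma pow_le_exp_fac (t : ℝ) (ht : 0 ≤ t) (k : ℕ) : t ^ k ≤ k.factorial * rexp t := by
  have h1 : t ^ k / k.factorial ≤ rexp t := by
    calc t ^ k / k.factorial ≤ ∑ i ∈ Finset.range (k+1), t ^ i / i.factorial := by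
          refine Finset.single_le_sum (f := fun i => t ^ i / (i.factorial : ℝ)) ?_ ?_
          · intro i _; positivity
          · exact Finset.self_mem_range_succ k
      _ ≤ rexp t := Real.sum_le_exp_of_nonneg ht _
  have hk : (0:ℝ) < k.factorial := by exact_mod_cast k.factorial_pos
  rw [div_le_iff₀ hk] at h1
  linarith [h1]

lemma integrable_pow_mul_exp_neg_sq (k : ℕ) :
    Integrable (fun x : ℝ => x ^ k * rexp (-x ^ 2)) := by
  have h1 : Integrable (fun x : ℝ => ((1:ℝ) + 2 ^ k * k.factorial) * rexp (-(1/2) * x ^ 2)) :=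
    (integrable_exp_neg_mul_sq (by norm_num)).const_mul _
  refine h1.mono' ?_ ?_
  · exact ((measurable_id.pow_const k).mul
      (((measurable_id.pow_const 2).neg).exp)).aestronglyMeasurable
  · filter_upwards with x
    have hx2 : -x ^ 2 = -(1/2) * x^2 + (-(1/2) * x^2) := by ring
    rw [Real.norm_eq_abs, abs_mul, abs_of_pos (exp_pos _), hx2, Real.exp_add, ← mul_assoc]
    have hb : |x| ^ k * rexp (-(1/2) * x ^ 2) ≤ 1 + 2 ^ k * k.factorial := by
      rcases le_or_gt (|x|) 1 with hx | hx
      · have : |x| ^ k ≤ 1 := pow_le_one₀ (abs_nonneg x) hx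
        have he : rexp (-(1/2) * x^2) ≤ 1 := by
          rw [Real.exp_le_one_iff]; nlinarith [sq_nonneg x]
        nlinarith [Real.exp_pos (-(1/2) * x^2), pow_nonneg (abs_nonneg x) k,
          pow_pos (show (0:ℝ) < 2 by norm_num) k, (Nat.cast_pos (α := ℝ)).mpr k.factorial_pos]
      · have h2 : |x| ^ k ≤ |x| ^ (2 * k) := pow_le_pow_right₀ hx.le (by omega)
        have h3 : |x| ^ (2 * k) = (2 * (x^2/2)) ^ k := by
          rw [pow_mul, ← _root_.abs_pow]
          rw [_root_.abs_of_nonneg (by positivity)]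
          ring_nf
        have h4 : (x^2/2) ^ k ≤ k.factorial * rexp (x^2/2) :=
          pow_le_exp_fac _ (by positivity) k
        have h5 : |x| ^ k * rexp (-(1/2) * x^2) ≤ (2:ℝ)^k * ((x^2/2)^k) * rexp (-(1/2)*x^2) := by
          apply mul_le_mul_of_nonneg_right _ (exp_pos _).le
          rw [h3] at h2; calc |x|^k ≤ (2 * (x^2/2))^k := h2
            _ = 2^k * (x^2/2)^k := by rw [mul_pow]
        calc |x| ^ k * rexp (-(1/2) * x^2) ≤ (2:ℝ)^k * ((x^2/2)^k) * rexp (-(1/2)*x^2) := h5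
          _ ≤ (2:ℝ)^k * (k.factorial * rexp (x^2/2)) * rexp (-(1/2)*x^2) := by
              apply mul_le_mul_of_nonneg_right _ (exp_pos _).le
              exact mul_le_mul_of_nonneg_left h4 (by positivity)
          _ = 2^k * k.factorial * (rexp (x^2/2) * rexp (-(1/2)*x^2)) := by ring
          _ = 2^k * k.factorial * rexp (x^2/2 + -(1/2)*x^2) := by rw [Real.exp_add]
          _ = 2^k * k.factorial := by ring_nf; rw [Real.exp_zero]; ring
          _ ≤ 1 + 2^k * k.factorial := by linarith
    calc |x ^ k| * rexp (-(1/2) * x^2) * rexp (-(1/2) * x^2)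
        = (|x|^k * rexp (-(1/2)*x^2)) * rexp (-(1/2)*x^2) := by rw [_root_.abs_pow]
      _ ≤ (1 + 2^k * k.factorial) * rexp (-(1/2)*x^2) :=
          mul_le_mul_of_nonneg_right hb (exp_pos _).le

lemma tendsto_pme_atTop (k : ℕ) :
    Tendsto (fun x : ℝ => x ^ k * rexp (-x ^ 2)) atTop (nhds 0) := by
  have hsq : Tendsto (fun x : ℝ => x ^ 2) atTop atTop := tendsto_pow_atTop two_ne_zero
  have h1 : Tendsto (fun x : ℝ => x ^ (2*k) * rexp (-x ^ 2)) atTop (nhds 0) := by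
    have := (tendsto_pow_mul_exp_neg_atTop_nhds_zero k).comp hsq
    simpa only [Function.comp_def, ← pow_mul, mul_comm 2 k] using this
  have h0 : Tendsto (fun x : ℝ => rexp (-x ^ 2)) atTop (nhds 0) := by
    have := Real.tendsto_exp_atBot.comp (tendsto_neg_atBot_iff.mpr hsq)
    simpa [Function.comp_def] using this
  refine tendsto_of_tendsto_of_tendsto_of_le_of_le' tendsto_const_nhds
    (by simpa using h1.add h0) ?_ ?_
  · filter_upwards [eventually_ge_atTop (0:ℝ)] with x hx
    positivity
  · filter_upwards [eventually_ge_atTop (1:ℝ)] with x hx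
    have h2 : x ^ k ≤ x ^ (2*k) := pow_le_pow_right₀ hx (by omega)
    nlinarith [exp_pos (-x^2), mul_le_mul_of_nonneg_right h2 (exp_pos (-x^2)).le]

lemma tendsto_pme_atBot (k : ℕ) :
    Tendsto (fun x : ℝ => x ^ k * rexp (-x ^ 2)) atBot (nhds 0) := by
  have h1 := ((tendsto_pme_atTop k).comp tendsto_neg_atBot_atTop).const_mul ((-1:ℝ)^k)
  rw [mul_zero] at h1
  refine h1.congr fun x => ?_
  show (-1:ℝ)^k * ((-x) ^ k * rexp (-(-x) ^ 2)) = x ^ k * rexp (-x ^ 2)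
  rw [show ((-x):ℝ)^k = (-1)^k * x^k from neg_pow x k, neg_sq]
  calc (-1:ℝ)^k * ((-1)^k * x^k * rexp (-x^2))
      = ((-1:ℝ)*(-1))^k * (x^k * rexp (-x^2)) := by rw [mul_pow]; ring
    _ = x ^ k * rexp (-x^2) := by norm_num

lemma gint0 : ∫ x : ℝ, rexp (-x ^ 2) = √π := by
  simpa using integral_gaussian 1

lemma hderiv1 (x : ℝ) : HasDerivAt (fun x : ℝ => -(1/2) * rexp (-x ^ 2))
    (x * rexp (-x ^ 2)) x := by
  have h := (((hasDerivAt_pow 2 x).neg).exp).const_mul (-(1/2) : ℝ)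
  refine h.congr_deriv ?_
  simp [pow_one]
  ring

lemma gint1 : ∫ x : ℝ, x * rexp (-x ^ 2) = 0 := by
  have hb : Tendsto (fun x : ℝ => -(1/2) * rexp (-x ^ 2)) atBot (nhds 0) := by
    have := (tendsto_pme_atBot 0).const_mul (-(1/2) : ℝ)
    rw [mul_zero] at this
    refine this.congr fun x => by ring
  have ht : Tendsto (fun x : ℝ => -(1/2) * rexp (-x ^ 2)) atTop (nhds 0) := by
    have := (tendsto_pme_atTop 0).const_mul (-(1/2) : ℝ)
    rw [mul_zero] at this
    refine this.congr fun x => by ring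
  have := integral_of_hasDerivAt_of_tendsto hderiv1
    (by simpa [pow_one] using integrable_pow_mul_exp_neg_sq 1) hb ht
  simpa using this

lemma hderiv2 (x : ℝ) : HasDerivAt (fun x : ℝ => -(1/2) * (x * rexp (-x ^ 2)))
    (x ^ 2 * rexp (-x ^ 2) - (1/2) * rexp (-x ^ 2)) x := by
  have h := ((hasDerivAt_id x).mul (((hasDerivAt_pow 2 x).neg).exp)).const_mul (-(1/2) : ℝ)
  refine h.congr_deriv ?_
  simp [pow_one]
  ring

lemma gint2 : ∫ x : ℝ, x ^ 2 * rexp (-x ^ 2) = √π / 2 := by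
  have hb : Tendsto (fun x : ℝ => -(1/2) * (x * rexp (-x ^ 2))) atBot (nhds 0) := by
    have := (tendsto_pme_atBot 1).const_mul (-(1/2) : ℝ)
    rw [mul_zero] at this
    exact this.congr fun x => by rw [pow_one]
  have ht : Tendsto (fun x : ℝ => -(1/2) * (x * rexp (-x ^ 2))) atTop (nhds 0) := by
    have := (tendsto_pme_atTop 1).const_mul (-(1/2) : ℝ)
    rw [mul_zero] at this
    exact this.congr fun x => by rw [pow_one]
  have hint : Integrable (fun x : ℝ => x ^ 2 * rexp (-x ^ 2) - (1/2) * rexp (-x ^ 2)) :=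
    (integrable_pow_mul_exp_neg_sq 2).sub
      ((by simpa using integrable_pow_mul_exp_neg_sq 0 : Integrable (fun x : ℝ => rexp (-x^2))).const_mul _)
  have h := integral_of_hasDerivAt_of_tendsto hderiv2 hint hb ht
  rw [sub_zero] at h
  rw [integral_sub (integrable_pow_mul_exp_neg_sq 2)
    ((by simpa using integrable_pow_mul_exp_neg_sq 0 : Integrable (fun x : ℝ => rexp (-x^2))).const_mul _),
    integral_const_mul, gint0] at h
  linarith

lemma hderiv3 (x : ℝ) : HasDerivAt (fun x : ℝ => -(1/2) * ((x ^ 2 + 1) * rexp (-x ^ 2)))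
    (x ^ 3 * rexp (-x ^ 2)) x := by
  have h := (((hasDerivAt_pow 2 x).add_const 1).mul (((hasDerivAt_pow 2 x).neg).exp)).const_mul (-(1/2) : ℝ)
  refine h.congr_deriv ?_
  simp [pow_one]
  ring

lemma gint3 : ∫ x : ℝ, x ^ 3 * rexp (-x ^ 2) = 0 := by
  have hb : Tendsto (fun x : ℝ => -(1/2) * ((x ^ 2 + 1) * rexp (-x ^ 2))) atBot (nhds 0) := by
    have := ((tendsto_pme_atBot 2).add (tendsto_pme_atBot 0)).const_mul (-(1/2) : ℝ)
    norm_num at this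
    exact this.congr fun x => by ring
  have ht : Tendsto (fun x : ℝ => -(1/2) * ((x ^ 2 + 1) * rexp (-x ^ 2))) atTop (nhds 0) := by
    have := ((tendsto_pme_atTop 2).add (tendsto_pme_atTop 0)).const_mul (-(1/2) : ℝ)
    norm_num at this
    exact this.congr fun x => by ring
  have h := integral_of_hasDerivAt_of_tendsto hderiv3 (integrable_pow_mul_exp_neg_sq 3) hb ht
  simpa using h

lemma hderiv4 (x : ℝ) : HasDerivAt (fun x : ℝ => -(1/2) * (x ^ 3 * rexp (-x ^ 2)))
    (x ^ 4 * rexp (-x ^ 2) - (3/2) * (x ^ 2 * rexp (-x ^ 2))) x := by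
  have h := ((hasDerivAt_pow 3 x).mul (((hasDerivAt_pow 2 x).neg).exp)).const_mul (-(1/2) : ℝ)
  refine h.congr_deriv ?_
  simp [pow_one]
  ring

lemma gint4 : ∫ x : ℝ, x ^ 4 * rexp (-x ^ 2) = 3 * √π / 4 := by
  have hb : Tendsto (fun x : ℝ => -(1/2) * (x ^ 3 * rexp (-x ^ 2))) atBot (nhds 0) := by
    have := (tendsto_pme_atBot 3).const_mul (-(1/2) : ℝ)
    rw [mul_zero] at this
    exact this.congr fun x => rfl
  have ht : Tendsto (fun x : ℝ => -(1/2) * (x ^ 3 * rexp (-x ^ 2))) atTop (nhds 0) := by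
    have := (tendsto_pme_atTop 3).const_mul (-(1/2) : ℝ)
    rw [mul_zero] at this
    exact this.congr fun x => rfl
  have hint : Integrable (fun x : ℝ => x ^ 4 * rexp (-x ^ 2) - (3/2) * (x ^ 2 * rexp (-x ^ 2))) :=
    (integrable_pow_mul_exp_neg_sq 4).sub ((integrable_pow_mul_exp_neg_sq 2).const_mul _)
  have h := integral_of_hasDerivAt_of_tendsto hderiv4 hint hb ht
  rw [sub_zero] at h
  rw [integral_sub (integrable_pow_mul_exp_neg_sq 4) ((integrable_pow_mul_exp_neg_sq 2).const_mul _),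
    integral_const_mul, gint2] at h
  linarith

noncomputable def γh : Measure ℝ := gaussianReal 0 (1/2)

instance : IsProbabilityMeasure γh := by unfold γh; infer_instance

lemma pdf_eq : ∀ x : ℝ, gaussianPDFReal 0 (1/2) x = (√π)⁻¹ * rexp (-x ^ 2) := by
  intro x
  rw [gaussianPDFReal_def]
  have hv : ((1/2 : ℝ≥0) : ℝ) = 1/2 := by norm_num
  rw [hv]
  show (√(2 * π * (1/2)))⁻¹ * rexp (-(x - 0) ^ 2 / (2 * (1/2))) = _
  rw [show (2 * π * (1/2) : ℝ) = π by ring]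
  rw [show (-(x - 0) ^ 2 / (2 * (1/2)) : ℝ) = -x ^ 2 by ring]

lemma pdf_nonneg (x : ℝ) : 0 ≤ gaussianPDFReal 0 (1/2) x := gaussianPDFReal_nonneg _ _ x

lemma γh_eq : γh = MeasureTheory.volume.withDensity
    (fun x => ((gaussianPDFReal 0 (1/2) x).toNNReal : ℝ≥0∞)) := by
  rw [γh, gaussianReal_of_var_ne_zero 0 (by norm_num : (1/2 : ℝ≥0) ≠ 0)]
  rfl

lemma integral_γh {E : Type*} [NormedAddCommGroup E] [NormedSpace ℝ E] (g : ℝ → E) :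
    ∫ x, g x ∂γh = ∫ x, ((√π)⁻¹ * rexp (-x ^ 2)) • g x := by
  rw [γh_eq, integral_withDensity_eq_integral_smul
    ((measurable_gaussianPDFReal 0 (1/2)).real_toNNReal) g]
  congr 1
  funext x
  rw [NNReal.smul_def, Real.coe_toNNReal _ (pdf_nonneg x), pdf_eq x]

lemma integrable_γh_pow (k : ℕ) : Integrable (fun x => x ^ k) γh := by
  rw [γh_eq, integrable_withDensity_iff ((measurable_gaussianPDFReal 0 (1/2)).real_toNNReal.coe_nnreal_ennreal) (Eventually.of_forall fun x => ENNReal.coe_lt_top)]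
  have : Integrable (fun x : ℝ => (√π)⁻¹ * (x ^ k * rexp (-x ^ 2))) :=
    (integrable_pow_mul_exp_neg_sq k).const_mul _
  refine this.congr (Eventually.of_forall fun x => ?_)
  show (√π)⁻¹ * (x ^ k * rexp (-x ^ 2)) = x ^ k * (((gaussianPDFReal 0 (1/2) x).toNNReal : ℝ≥0∞)).toReal
  rw [ENNReal.coe_toReal, Real.coe_toNNReal _ (pdf_nonneg x), pdf_eq x]
  ring

lemma sqrtπ_pos : (0:ℝ) < √π := Real.sqrt_pos.mpr Real.pi_pos

lemma gm0 : ∫ x, x ^ 0 ∂γh = (1:ℝ) := by simp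
lemma gm1 : ∫ x, x ^ 1 ∂γh = (0:ℝ) := by
  rw [integral_γh]
  simp only [smul_eq_mul]
  have : ∀ x : ℝ, (√π)⁻¹ * rexp (-x ^ 2) * x ^ 1 = (√π)⁻¹ * (x * rexp (-x^2)) := by
    intro x; ring
  rw [funext this, integral_const_mul, gint1, mul_zero]
lemma gm2 : ∫ x, x ^ 2 ∂γh = (1/2:ℝ) := by
  rw [integral_γh]
  simp only [smul_eq_mul]
  have : ∀ x : ℝ, (√π)⁻¹ * rexp (-x ^ 2) * x ^ 2 = (√π)⁻¹ * (x ^ 2 * rexp (-x^2)) := by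
    intro x; ring
  rw [funext this, integral_const_mul, gint2]
  field_simp
lemma gm3 : ∫ x, x ^ 3 ∂γh = (0:ℝ) := by
  rw [integral_γh]
  simp only [smul_eq_mul]
  have : ∀ x : ℝ, (√π)⁻¹ * rexp (-x ^ 2) * x ^ 3 = (√π)⁻¹ * (x ^ 3 * rexp (-x^2)) := by
    intro x; ring
  rw [funext this, integral_const_mul, gint3, mul_zero]
lemma gm4 : ∫ x, x ^ 4 ∂γh = (3/4:ℝ) := by
  rw [integral_γh]
  simp only [smul_eq_mul]
  have : ∀ x : ℝ, (√π)⁻¹ * rexp (-x ^ 2) * x ^ 4 = (√π)⁻¹ * (x ^ 4 * rexp (-x^2)) := by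
    intro x; ring
  rw [funext this, integral_const_mul, gint4]
  rw [inv_mul_eq_div, div_eq_iff (ne_of_gt sqrtπ_pos)]
  ring

/-! ### complex side -/

noncomputable def PP : Measure (ℝ × ℝ) := γh.prod γh

instance : IsProbabilityMeasure PP := by unfold PP; infer_instance

def φc : ℝ × ℝ → ℂ := fun p => (p.1 : ℂ) + (p.2 : ℂ) * Complex.I

lemma measurable_φc : Measurable φc :=
  (Complex.measurable_ofReal.comp measurable_fst).add
    ((Complex.measurable_ofReal.comp measurable_snd).mul_const _)

lemma scg_eq : stdComplexGaussian = PP.map φc := rfl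

instance : IsProbabilityMeasure stdComplexGaussian := by
  rw [scg_eq]; exact Measure.isProbabilityMeasure_map measurable_φc.aemeasurable

lemma conj_φc (p : ℝ × ℝ) : (starRingEnd ℂ) (φc p) = (p.1 : ℂ) - (p.2 : ℂ) * Complex.I := by
  simp [φc, Complex.conj_ofReal]
  ring

lemma cmint (j : ℕ) : Integrable (fun x : ℝ => (x:ℂ) ^ j) γh := by
  have := (integrable_γh_pow j).ofReal (𝕜 := ℂ)
  refine this.congr (Eventually.of_forall fun x => ?_)
  push_cast
  rfl

lemma Jint (j k : ℕ) : Integrable (fun p : ℝ × ℝ => (p.1:ℂ) ^ j * (p.2:ℂ) ^ k) PP :=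
  (cmint j).mul_prod (cmint k)

lemma Jval (j k : ℕ) : ∫ p : ℝ × ℝ, (p.1:ℂ) ^ j * (p.2:ℂ) ^ k ∂PP
    = ((∫ x, x ^ j ∂γh : ℝ) : ℂ) * ((∫ x, x ^ k ∂γh : ℝ) : ℂ) := by
  rw [PP]
  rw [integral_prod_mul (L := ℂ) (fun x : ℝ => (x:ℂ) ^ j) (fun x : ℝ => (x:ℂ) ^ k)]
  have hcast : ∀ j : ℕ, ∫ x : ℝ, (x:ℂ) ^ j ∂γh = ((∫ x, x ^ j ∂γh : ℝ) : ℂ) := by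
    intro j
    rw [show ((∫ x, x ^ j ∂γh : ℝ) : ℂ) = (RCLike.ofReal (∫ x, x ^ j ∂γh) : ℂ) from rfl,
      ← integral_ofReal]
    congr 1; funext x; push_cast; rfl
  rw [hcast j, hcast k]

lemma mom_transfer (f : ℂ → ℂ) (hf : Measurable f) :
    ∫ z, f z ∂stdComplexGaussian = ∫ p, f (φc p) ∂PP := by
  rw [scg_eq]
  exact integral_map measurable_φc.aemeasurable (hf.aestronglyMeasurable)

lemma meas_zab (a b : ℕ) : Measurable (fun z : ℂ => z ^ a * (starRingEnd ℂ) z ^ b) :=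
  (measurable_id.pow_const a).mul ((Complex.continuous_conj.measurable).pow_const b)

lemma mm00 : ∫ z, z ^ 0 * (starRingEnd ℂ) z ^ 0 ∂stdComplexGaussian = 1 := by simp

lemma mm10 : ∫ z, z ^ 1 * (starRingEnd ℂ) z ^ 0 ∂stdComplexGaussian = 0 := by
  rw [mom_transfer _ (meas_zab 1 0)]
  have he : (fun p : ℝ × ℝ => φc p ^ 1 * (starRingEnd ℂ) (φc p) ^ 0)
      = fun p => (p.1:ℂ) ^ 1 * (p.2:ℂ) ^ 0 + ((p.1:ℂ) ^ 0 * (p.2:ℂ) ^ 1) * Complex.I := by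
    funext p; rw [conj_φc]; show φc p ^ 1 * _ = _; rw [φc]; ring
  rw [he, integral_add (Jint 1 0) ((Jint 0 1).mul_const _), integral_mul_const,
    Jval, Jval, gm0, gm1]
  norm_num

lemma mm20 : ∫ z, z ^ 2 * (starRingEnd ℂ) z ^ 0 ∂stdComplexGaussian = 0 := by
  rw [mom_transfer _ (meas_zab 2 0)]
  have he : (fun p : ℝ × ℝ => φc p ^ 2 * (starRingEnd ℂ) (φc p) ^ 0)
      = fun p => ((p.1:ℂ) ^ 2 * (p.2:ℂ) ^ 0 - (p.1:ℂ) ^ 0 * (p.2:ℂ) ^ 2)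
          + ((p.1:ℂ) ^ 1 * (p.2:ℂ) ^ 1) * (2 * Complex.I) := by
    funext p; rw [conj_φc]; show φc p ^ 2 * _ = _; rw [φc]
    linear_combination ((p.2:ℂ)^2) * Complex.I_sq
  have i1 : Integrable (fun p : ℝ × ℝ => (p.1:ℂ) ^ 2 * (p.2:ℂ) ^ 0 - (p.1:ℂ) ^ 0 * (p.2:ℂ) ^ 2) PP := by
    exact (Jint 2 0).sub (Jint 0 2)
  rw [he, integral_add i1 ((Jint 1 1).mul_const _),
    integral_mul_const, integral_sub (Jint 2 0) (Jint 0 2), Jval, Jval, Jval,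
    gm0, gm1, gm2]
  norm_num

lemma mm11 : ∫ z, z ^ 1 * (starRingEnd ℂ) z ^ 1 ∂stdComplexGaussian = 1 := by
  rw [mom_transfer _ (meas_zab 1 1)]
  have he : (fun p : ℝ × ℝ => φc p ^ 1 * (starRingEnd ℂ) (φc p) ^ 1)
      = fun p => (p.1:ℂ) ^ 2 * (p.2:ℂ) ^ 0 + (p.1:ℂ) ^ 0 * (p.2:ℂ) ^ 2 := by
    funext p; rw [conj_φc]; show φc p ^ 1 * _ = _; rw [φc]
    linear_combination (-(p.2:ℂ)^2) * Complex.I_sq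
  rw [he, integral_add (Jint 2 0) (Jint 0 2), Jval, Jval, gm0, gm2]
  norm_num

lemma mm21 : ∫ z, z ^ 2 * (starRingEnd ℂ) z ^ 1 ∂stdComplexGaussian = 0 := by
  rw [mom_transfer _ (meas_zab 2 1)]
  have he : (fun p : ℝ × ℝ => φc p ^ 2 * (starRingEnd ℂ) (φc p) ^ 1)
      = fun p => ((p.1:ℂ) ^ 3 * (p.2:ℂ) ^ 0 + (p.1:ℂ) ^ 1 * (p.2:ℂ) ^ 2)
          + ((p.1:ℂ) ^ 2 * (p.2:ℂ) ^ 1 + (p.1:ℂ) ^ 0 * (p.2:ℂ) ^ 3) * Complex.I := by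
    funext p; rw [conj_φc]; show φc p ^ 2 * _ = _; rw [φc]
    linear_combination (-(p.1:ℂ)*(p.2:ℂ)^2 - (p.2:ℂ)^3 * Complex.I) * Complex.I_sq
  have i1 : Integrable (fun p : ℝ × ℝ => (p.1:ℂ) ^ 3 * (p.2:ℂ) ^ 0 + (p.1:ℂ) ^ 1 * (p.2:ℂ) ^ 2) PP := by
    exact (Jint 3 0).add (Jint 1 2)
  have i2 : Integrable (fun p : ℝ × ℝ => ((p.1:ℂ) ^ 2 * (p.2:ℂ) ^ 1 + (p.1:ℂ) ^ 0 * (p.2:ℂ) ^ 3) * Complex.I) PP := by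
    exact ((Jint 2 1).add (Jint 0 3)).mul_const _
  rw [he, integral_add i1 i2,
    integral_mul_const, integral_add (Jint 3 0) (Jint 1 2),
    integral_add (Jint 2 1) (Jint 0 3), Jval, Jval, Jval, Jval, gm0, gm1, gm2, gm3]
  norm_num

lemma mm22 : ∫ z, z ^ 2 * (starRingEnd ℂ) z ^ 2 ∂stdComplexGaussian = 2 := by
  rw [mom_transfer _ (meas_zab 2 2)]
  have he : (fun p : ℝ × ℝ => φc p ^ 2 * (starRingEnd ℂ) (φc p) ^ 2)
      = fun p => ((p.1:ℂ) ^ 4 * (p.2:ℂ) ^ 0 + (p.1:ℂ) ^ 0 * (p.2:ℂ) ^ 4)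
          + ((p.1:ℂ) ^ 2 * (p.2:ℂ) ^ 2) * 2 := by
    funext p; rw [conj_φc]; show φc p ^ 2 * _ = _; rw [φc]
    linear_combination (-2*(p.1:ℂ)^2*(p.2:ℂ)^2 + (p.2:ℂ)^4 * (Complex.I^2 - 1)) * Complex.I_sq
  have i1 : Integrable (fun p : ℝ × ℝ => (p.1:ℂ) ^ 4 * (p.2:ℂ) ^ 0 + (p.1:ℂ) ^ 0 * (p.2:ℂ) ^ 4) PP := by
    exact (Jint 4 0).add (Jint 0 4)
  rw [he, integral_add i1 ((Jint 2 2).mul_const _),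
    integral_mul_const, integral_add (Jint 4 0) (Jint 0 4), Jval, Jval, Jval,
    gm0, gm2, gm4]
  norm_num

lemma mm_conj (a b : ℕ) : ∫ z, z ^ b * (starRingEnd ℂ) z ^ a ∂stdComplexGaussian
    = (starRingEnd ℂ) (∫ z, z ^ a * (starRingEnd ℂ) z ^ b ∂stdComplexGaussian) := by
  rw [← integral_conj]
  congr 1; funext z
  rw [_root_.map_mul, map_pow, map_pow, Complex.conj_conj]
  ring

lemma mm01 : ∫ z, z ^ 0 * (starRingEnd ℂ) z ^ 1 ∂stdComplexGaussian = 0 := by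
  rw [mm_conj 1 0, mm10, map_zero]
lemma mm02 : ∫ z, z ^ 0 * (starRingEnd ℂ) z ^ 2 ∂stdComplexGaussian = 0 := by
  rw [mm_conj 2 0, mm20, map_zero]
lemma mm12 : ∫ z, z ^ 1 * (starRingEnd ℂ) z ^ 2 ∂stdComplexGaussian = 0 := by
  rw [mm_conj 2 1, mm21, map_zero]

lemma mm_int {a b : ℕ} (hab : a + b ≤ 4) :
    Integrable (fun z : ℂ => z ^ a * (starRingEnd ℂ) z ^ b) stdComplexGaussian := by
  rw [scg_eq, integrable_map_measure (meas_zab a b).aestronglyMeasurable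
    measurable_φc.aemeasurable]
  have hmaj : Integrable (fun p : ℝ × ℝ => 1 + ((p.1 ^ 2 + p.2 ^ 2) ^ 2)) PP := by
    have h1 : Integrable (fun p : ℝ × ℝ => p.1 ^ 4 * p.2 ^ 0) PP :=
      (integrable_γh_pow 4).mul_prod (integrable_γh_pow 0)
    have h2 : Integrable (fun p : ℝ × ℝ => p.1 ^ 2 * p.2 ^ 2) PP :=
      (integrable_γh_pow 2).mul_prod (integrable_γh_pow 2)
    have h3 : Integrable (fun p : ℝ × ℝ => p.1 ^ 0 * p.2 ^ 4) PP :=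
      (integrable_γh_pow 0).mul_prod (integrable_γh_pow 4)
    have h4 : Integrable (fun p : ℝ × ℝ => (1:ℝ) + (p.1 ^ 4 * p.2 ^ 0 + 2 * (p.1 ^ 2 * p.2 ^ 2) + p.1 ^ 0 * p.2 ^ 4)) PP := by
      exact (integrable_const (1:ℝ)).add ((h1.add (h2.const_mul 2)).add h3)
    refine h4.congr (Eventually.of_forall fun p => ?_)
    ring
  refine hmaj.mono' ((meas_zab a b).comp measurable_φc).aestronglyMeasurable
    (Eventually.of_forall fun p => ?_)
  have hnz : ‖φc p‖ ^ 2 = p.1 ^ 2 + p.2 ^ 2 := by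
    show ‖(p.1:ℂ) + (p.2:ℂ) * Complex.I‖ ^ 2 = _
    rw [Complex.sq_norm, Complex.normSq_add_mul_I]
  show ‖φc p ^ a * (starRingEnd ℂ) (φc p) ^ b‖ ≤ _
  rw [norm_mul, norm_pow, norm_pow, RCLike.norm_conj, ← pow_add]
  rcases le_or_gt (‖φc p‖) 1 with hr | hr
  · have h5 : ‖φc p‖ ^ (a + b) ≤ 1 := pow_le_one₀ (norm_nonneg _) hr
    nlinarith [sq_nonneg (p.1 ^ 2 + p.2 ^ 2)]
  · have h5 : ‖φc p‖ ^ (a + b) ≤ ‖φc p‖ ^ 4 := pow_le_pow_right₀ hr.le hab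
    have h6 : ‖φc p‖ ^ 4 = (p.1 ^ 2 + p.2 ^ 2) ^ 2 := by
      rw [show 4 = 2 * 2 by rfl, pow_mul, hnz]
    nlinarith

variable {Ω : Type*} [MeasurableSpace Ω] {μ : Measure Ω}

lemma indep_integral_mul_complex {X Y : Ω → ℂ}
    (h : IndepFun X Y μ) (hX : Integrable X μ) (hY : Integrable Y μ) :
    ∫ ω, X ω * Y ω ∂μ = (∫ ω, X ω ∂μ) * ∫ ω, Y ω ∂μ := by
  have hXY : Integrable (fun ω => X ω * Y ω) μ := by exact h.integrable_mul hX hY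
  have e1 : ∀ (Z : Ω → ℂ), Integrable Z μ →
      ∫ ω, Z ω ∂μ = ↑(∫ ω, (Z ω).re ∂μ) + ↑(∫ ω, (Z ω).im ∂μ) * Complex.I := by
    intro Z hZ
    exact (integral_re_add_im hZ).symm
  have hA : Integrable (fun ω => (X ω).re) μ := by exact hX.re
  have hB : Integrable (fun ω => (X ω).im) μ := by exact hX.im
  have hC : Integrable (fun ω => (Y ω).re) μ := by exact hY.re
  have hD : Integrable (fun ω => (Y ω).im) μ := by exact hY.im
  have hac : ∫ ω, (X ω).re * (Y ω).re ∂μ = (∫ ω, (X ω).re ∂μ) * ∫ ω, (Y ω).re ∂μ := by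
    exact (h.comp Complex.measurable_re Complex.measurable_re).integral_mul_eq_mul_integral hA.aestronglyMeasurable hC.aestronglyMeasurable
  have hbd : ∫ ω, (X ω).im * (Y ω).im ∂μ = (∫ ω, (X ω).im ∂μ) * ∫ ω, (Y ω).im ∂μ := by
    exact (h.comp Complex.measurable_im Complex.measurable_im).integral_mul_eq_mul_integral hB.aestronglyMeasurable hD.aestronglyMeasurable
  have had : ∫ ω, (X ω).re * (Y ω).im ∂μ = (∫ ω, (X ω).re ∂μ) * ∫ ω, (Y ω).im ∂μ := by
    exact (h.comp Complex.measurable_re Complex.measurable_im).integral_mul_eq_mul_integral hA.aestronglyMeasurable hD.aestronglyMeasurable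
  have hbc : ∫ ω, (X ω).im * (Y ω).re ∂μ = (∫ ω, (X ω).im ∂μ) * ∫ ω, (Y ω).re ∂μ := by
    exact (h.comp Complex.measurable_im Complex.measurable_re).integral_mul_eq_mul_integral hB.aestronglyMeasurable hC.aestronglyMeasurable
  rw [e1 (fun ω => X ω * Y ω) hXY, e1 X hX, e1 Y hY]
  have hre : (fun ω => (X ω * Y ω).re)
      = fun ω => (X ω).re * (Y ω).re - (X ω).im * (Y ω).im :=
    funext fun ω => Complex.mul_re _ _
  have him : (fun ω => (X ω * Y ω).im)
      = fun ω => (X ω).re * (Y ω).im + (X ω).im * (Y ω).re :=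
    funext fun ω => Complex.mul_im _ _
  rw [hre, him, integral_sub (by exact (h.comp Complex.measurable_re Complex.measurable_re).integrable_mul hA hC)
      (by exact (h.comp Complex.measurable_im Complex.measurable_im).integrable_mul hB hD),
    integral_add (by exact (h.comp Complex.measurable_re Complex.measurable_im).integrable_mul hA hD)
      (by exact (h.comp Complex.measurable_im Complex.measurable_re).integrable_mul hB hC),
    hac, hbd, had, hbc]
  push_cast
  linear_combination (-((∫ ω, (X ω).im ∂μ : ℝ) : ℂ) * ((∫ ω, (Y ω).im ∂μ : ℝ) : ℂ)) * Complex.I_sq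

lemma integral_prod_of_iIndep {ι : Type*} [IsProbabilityMeasure μ]
    {Y : ι → Ω → ℂ} (hmeas : ∀ i, Measurable (Y i))
    (hind : iIndepFun Y μ)
    (hint : ∀ i, Integrable (Y i) μ) (s : Finset ι) :
    Integrable (fun ω => ∏ i ∈ s, Y i ω) μ ∧
      ∫ ω, ∏ i ∈ s, Y i ω ∂μ = ∏ i ∈ s, ∫ ω, Y i ω ∂μ := by
  classical
  induction s using Finset.induction_on with
  | empty => simp
  | @insert i s hi ih =>
    have hfin : IndepFun (fun ω => ∏ j ∈ s, Y j ω) (Y i) μ := by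
      refine (hind.indepFun_finsetProd_of_notMem hmeas hi).congr ?_ ?_
      · exact Eventually.of_forall fun ω => Finset.prod_apply ω s Y
      · exact EventuallyEq.rfl
    have hint2 : Integrable (fun ω => (∏ j ∈ s, Y j ω) * Y i ω) μ := by
      exact hfin.integrable_mul ih.1 (hint i)
    have hpt : ∀ ω, ∏ j ∈ insert i s, Y j ω = (∏ j ∈ s, Y j ω) * Y i ω := by
      intro ω; rw [Finset.prod_insert hi]; ring
    constructor
    · exact hint2.congr (Eventually.of_forall fun ω => (hpt ω).symm)
    · have h1 : ∫ ω, ∏ j ∈ insert i s, Y j ω ∂μ = ∫ ω, (∏ j ∈ s, Y j ω) * Y i ω ∂μ := by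
        congr 1; funext ω; exact hpt ω
      rw [h1, indep_integral_mul_complex hfin ih.1 (hint i), ih.2, Finset.prod_insert hi]
      ring

lemma core {ι : Type*} [Fintype ι] [DecidableEq ι] (F : ℕ → ℕ → ℂ)
    (F00 : F 0 0 = 1) (F11 : F 1 1 = 1) (F22 : F 2 2 = 2)
    (F10 : F 1 0 = 0) (F01 : F 0 1 = 0) (F20 : F 2 0 = 0)
    (i1 i2 i3 i4 : ι) :
    (∏ i, F ((if i1 = i then 1 else 0) + (if i3 = i then 1 else 0))
          ((if i2 = i then 1 else 0) + (if i4 = i then 1 else 0)))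
      = ((if i1 = i2 then (1:ℂ) else 0) * (if i3 = i4 then 1 else 0)
        + (if i1 = i4 then 1 else 0) * (if i2 = i3 then 1 else 0)) := by
  by_cases h12 : i1 = i2 <;> by_cases h14 : i1 = i4 <;>
    by_cases h23 : i2 = i3 <;> by_cases h34 : i3 = i4
  -- 1 TTTT
  · subst h12; subst h23; subst h34
    rw [Fintype.prod_eq_single i1 (fun j hj => by simp [Ne.symm hj, F00])]
    simp [F22]
    norm_num
  -- 2 TTTF
  · subst h12; subst h23
    exact absurd h14 h34
  -- 3 TTFT
  · subst h12; subst h34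
    exact absurd h14 h23
  -- 4 TTFF
  · subst h12; subst h14
    have hn : ¬ (i3 = i1) := fun h => h23 h.symm
    rw [Finset.prod_eq_zero (Finset.mem_univ i3) (by simp [h23, hn, F10])]
    simp [h23, hn]
  -- 5 TFTT
  · subst h12; subst h23; subst h34
    exact absurd rfl h14
  -- 6 TFTF
  · subst h12; subst h23
    rw [Finset.prod_eq_zero (Finset.mem_univ i4) (by simp [h14, h34, F01])]
    simp [h14, h34]
  -- 7 TFFT
  · subst h12; subst h34
    have hn : ¬ (i3 = i1) := fun h => h14 h.symm
    rw [← Finset.prod_subset (Finset.subset_univ ({i1, i3} : Finset ι)) (fun x _ hx => by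
      simp only [Finset.mem_insert, Finset.mem_singleton, not_or] at hx
      obtain ⟨hx1, hx3⟩ := hx
      simp [Ne.symm hx1, Ne.symm hx3, F00])]
    rw [Finset.prod_pair h14]
    simp [h14, hn, F11]
  -- 8 TFFF
  · subst h12
    have hn : ¬ (i3 = i4) := h34
    rw [Finset.prod_eq_zero (Finset.mem_univ i4) (by simp [h14, h34, F01])]
    simp [h14, h34, h23]
  -- 9 FTTT
  · subst h14; subst h23; exact absurd h34.symm h12
  -- 10 FTTF
  · subst h14; subst h23
    have hn : ¬ (i2 = i1) := fun h => h12 h.symm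
    rw [← Finset.prod_subset (Finset.subset_univ ({i1, i2} : Finset ι)) (fun x _ hx => by
      simp only [Finset.mem_insert, Finset.mem_singleton, not_or] at hx
      obtain ⟨hx1, hx2⟩ := hx
      simp [Ne.symm hx1, Ne.symm hx2, F00])]
    rw [Finset.prod_pair h12]
    simp [h12, hn, F11]
  -- 11 FTFT
  · subst h34; subst h14
    have hn : ¬ (i2 = i1) := fun h => h12 h.symm
    rw [Finset.prod_eq_zero (Finset.mem_univ i2) (by simp [h12, hn, F01])]
    simp [h12, hn]
  -- 12 FTFF
  · subst h14
    have hn : ¬ (i3 = i2) := fun h => h23 h.symm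
    rw [Finset.prod_eq_zero (Finset.mem_univ i2) (by simp [h12, hn, F01])]
    simp [h12, h23]
  -- 13 FFTT
  · subst h23; subst h34
    have hn : ¬ (i2 = i1) := fun h => h12 h.symm
    rw [Finset.prod_eq_zero (Finset.mem_univ i1) (by simp [hn, F10])]
    simp [h12, h14]
  -- 14 FFTF
  · subst h23
    have hn : ¬ (i2 = i1) := fun h => h12 h.symm
    have hn2 : ¬ (i4 = i1) := fun h => h14 h.symm
    rw [Finset.prod_eq_zero (Finset.mem_univ i1) (by simp [hn, hn2, F10])]
    simp [h12, h14]
  -- 15 FFFT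
  · subst h34
    have hn : ¬ (i2 = i1) := fun h => h12 h.symm
    have hn2 : ¬ (i3 = i1) := fun h => h14 h.symm
    rw [Finset.prod_eq_zero (Finset.mem_univ i1) (by simp [hn, hn2, F10])]
    simp [h12, h14]
  -- 16 FFFF
  · have hn : ¬ (i2 = i1) := fun h => h12 h.symm
    have hn2 : ¬ (i4 = i1) := fun h => h14 h.symm
    by_cases h31 : i3 = i1
    · rw [Finset.prod_eq_zero (Finset.mem_univ i1) (by simp [h31, hn, hn2, F20])]
      simp [h12, h14]
    · rw [Finset.prod_eq_zero (Finset.mem_univ i1) (by simp [h31, hn, hn2, F10])]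
      simp [h12, h14]

variable {Ω : Type*} [MeasurableSpace Ω] {μ : Measure Ω}



noncomputable def cmom (a b : ℕ) : ℂ := ∫ z, z ^ a * (starRingEnd ℂ) z ^ b ∂stdComplexGaussian

lemma cm00 : cmom 0 0 = 1 := mm00
lemma cm11 : cmom 1 1 = 1 := mm11
lemma cm22 : cmom 2 2 = 2 := mm22
lemma cm10 : cmom 1 0 = 0 := mm10
lemma cm01 : cmom 0 1 = 0 := mm01
lemma cm20 : cmom 2 0 = 0 := mm20

lemma prod_pow_ind {κ : Type*} [Fintype κ] [DecidableEq κ] (f : κ → ℂ) (c : κ) :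
    ∏ x, f x ^ (if c = x then 1 else 0) = f c := by
  have h : ∀ x : κ, f x ^ (if c = x then 1 else 0) = (if c = x then f x else 1) := by
    intro x; split_ifs <;> simp
  rw [Finset.prod_congr rfl (fun x _ => h x), Finset.prod_ite_eq, if_pos (Finset.mem_univ c)]

lemma prod_four {κ : Type*} [Fintype κ] [DecidableEq κ] (f g : κ → ℂ) (c1 c3 c2 c4 : κ) :
    ∏ x, (f x ^ ((if c1 = x then 1 else 0) + (if c3 = x then 1 else 0))
      * g x ^ ((if c2 = x then 1 else 0) + (if c4 = x then 1 else 0)))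
    = f c1 * f c3 * (g c2 * g c4) := by
  have h : ∀ x : κ, f x ^ ((if c1 = x then 1 else 0) + (if c3 = x then 1 else 0))
      * g x ^ ((if c2 = x then 1 else 0) + (if c4 = x then 1 else 0))
      = (f x ^ (if c1 = x then 1 else 0) * f x ^ (if c3 = x then 1 else 0))
        * (g x ^ (if c2 = x then 1 else 0) * g x ^ (if c4 = x then 1 else 0)) := by
    intro x; rw [pow_add, pow_add]
  rw [Finset.prod_congr rfl (fun x _ => h x), Finset.prod_mul_distrib,
    Finset.prod_mul_distrib, Finset.prod_mul_distrib, prod_pow_ind, prod_pow_ind,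
    prod_pow_ind, prod_pow_ind]

lemma sum4 {K : Type*} [Fintype K] (f g F G : K → ℂ) :
    ((∑ n, f n) * (∑ n, g n)) * ((∑ n, F n) * (∑ n, G n))
      = ∑ n1, ∑ n2, ∑ n3, ∑ n4, (f n1 * g n2) * (F n3 * G n4) := by
  calc ((∑ n, f n) * (∑ n, g n)) * ((∑ n, F n) * (∑ n, G n))
      = (∑ n1, ∑ n2, f n1 * g n2) * (∑ n3, ∑ n4, F n3 * G n4) := by
        rw [Finset.sum_mul_sum, Finset.sum_mul_sum]
    _ = ∑ n1, ∑ n3, (∑ n2, f n1 * g n2) * (∑ n4, F n3 * G n4) := by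
        rw [Finset.sum_mul_sum]
    _ = ∑ n1, ∑ n3, ∑ n2, ∑ n4, (f n1 * g n2) * (F n3 * G n4) :=
        Finset.sum_congr rfl fun n1 _ => Finset.sum_congr rfl fun n3 _ => by
          rw [Finset.sum_mul_sum]
    _ = ∑ n1, ∑ n2, ∑ n3, ∑ n4, (f n1 * g n2) * (F n3 * G n4) :=
        Finset.sum_congr rfl fun n1 _ => Finset.sum_comm

lemma moment_prod {ι : Type*} [Fintype ι] [DecidableEq ι] [IsProbabilityMeasure μ]
    {X : ι → Ω → ℂ} (hmeas : ∀ i, Measurable (X i))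
    (hind : iIndepFun X μ)
    (hlaw : ∀ i, Measure.map (X i) μ = stdComplexGaussian)
    (a b : ι → ℕ) (ha : ∀ i, a i ≤ 2) (hb : ∀ i, b i ≤ 2) :
    Integrable (fun ω => ∏ i, X i ω ^ a i * (starRingEnd ℂ) (X i ω) ^ b i) μ ∧
      ∫ ω, ∏ i, X i ω ^ a i * (starRingEnd ℂ) (X i ω) ^ b i ∂μ
        = ∏ i, cmom (a i) (b i) := by
  classical
  have hgm : ∀ i, Measurable (fun z : ℂ => z ^ a i * (starRingEnd ℂ) z ^ b i) :=
    fun i => meas_zab (a i) (b i)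
  have hYmeas : ∀ i, Measurable (fun ω => X i ω ^ a i * (starRingEnd ℂ) (X i ω) ^ b i) :=
    fun i => (hgm i).comp (hmeas i)
  have hYind : iIndepFun
      (fun i ω => X i ω ^ a i * (starRingEnd ℂ) (X i ω) ^ b i) μ := by
    exact hind.comp (fun i z => z ^ a i * (starRingEnd ℂ) z ^ b i) hgm
  have hYint : ∀ i, Integrable (fun ω => X i ω ^ a i * (starRingEnd ℂ) (X i ω) ^ b i) μ := by
    intro i
    have h1 : Integrable (fun z : ℂ => z ^ a i * (starRingEnd ℂ) z ^ b i)
        (Measure.map (X i) μ) := by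
      rw [hlaw i]; exact mm_int (by have := ha i; have := hb i; omega)
    exact (integrable_map_measure (hgm i).aestronglyMeasurable (hmeas i).aemeasurable).mp h1
  have H := integral_prod_of_iIndep hYmeas hYind hYint Finset.univ
  refine ⟨H.1, ?_⟩
  rw [H.2]
  refine Finset.prod_congr rfl fun i _ => ?_
  rw [cmom, ← hlaw i, integral_map (hmeas i).aemeasurable
    ((hgm i).aestronglyMeasurable)]

lemma key8 {No Mo : ℕ} [IsProbabilityMeasure μ]
    {X : ((Fin No × Fin Mo) ⊕ Fin No) → Ω → ℂ}
    (hmeas : ∀ i, Measurable (X i))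
    (hind : iIndepFun X μ)
    (hlaw : ∀ i, Measure.map (X i) μ = stdComplexGaussian)
    (p1 p2 p3 p4 : Fin No × Fin Mo) (n1 n2 n3 n4 : Fin No) :
    Integrable (fun ω => (X (Sum.inl p1) ω * (starRingEnd ℂ) (X (Sum.inl p2) ω)
        * X (Sum.inl p3) ω * (starRingEnd ℂ) (X (Sum.inl p4) ω))
      * (X (Sum.inr n1) ω * (starRingEnd ℂ) (X (Sum.inr n2) ω)
        * X (Sum.inr n3) ω * (starRingEnd ℂ) (X (Sum.inr n4) ω))) μ ∧
    ∫ ω, (X (Sum.inl p1) ω * (starRingEnd ℂ) (X (Sum.inl p2) ω)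
        * X (Sum.inl p3) ω * (starRingEnd ℂ) (X (Sum.inl p4) ω))
      * (X (Sum.inr n1) ω * (starRingEnd ℂ) (X (Sum.inr n2) ω)
        * X (Sum.inr n3) ω * (starRingEnd ℂ) (X (Sum.inr n4) ω)) ∂μ
      = ((if p1 = p2 then (1:ℂ) else 0) * (if p3 = p4 then 1 else 0)
          + (if p1 = p4 then 1 else 0) * (if p2 = p3 then 1 else 0))
        * ((if n1 = n2 then (1:ℂ) else 0) * (if n3 = n4 then 1 else 0)
          + (if n1 = n4 then 1 else 0) * (if n2 = n3 then 1 else 0)) := by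
  classical
  have ha : ∀ i : (Fin No × Fin Mo) ⊕ Fin No,
      (Sum.elim (fun p => (if p1 = p then 1 else 0) + (if p3 = p then 1 else 0))
        (fun n => (if n1 = n then 1 else 0) + (if n3 = n then 1 else 0)) i) ≤ 2 := by
    rintro (p | n) <;> simp only [Sum.elim_inl, Sum.elim_inr] <;> split_ifs <;> omega
  have hb : ∀ i : (Fin No × Fin Mo) ⊕ Fin No,
      (Sum.elim (fun p => (if p2 = p then 1 else 0) + (if p4 = p then 1 else 0))
        (fun n => (if n2 = n then 1 else 0) + (if n4 = n then 1 else 0)) i) ≤ 2 := by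
    rintro (p | n) <;> simp only [Sum.elim_inl, Sum.elim_inr] <;> split_ifs <;> omega
  have H := moment_prod hmeas hind hlaw _ _ ha hb
  have hpt : (fun ω => ∏ i,
        X i ω ^ (Sum.elim (fun p => (if p1 = p then 1 else 0) + (if p3 = p then 1 else 0))
          (fun n => (if n1 = n then 1 else 0) + (if n3 = n then 1 else 0)) i)
        * (starRingEnd ℂ) (X i ω) ^ (Sum.elim (fun p => (if p2 = p then 1 else 0) + (if p4 = p then 1 else 0))
          (fun n => (if n2 = n then 1 else 0) + (if n4 = n then 1 else 0)) i))
      = (fun ω => (X (Sum.inl p1) ω * (starRingEnd ℂ) (X (Sum.inl p2) ω)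
        * X (Sum.inl p3) ω * (starRingEnd ℂ) (X (Sum.inl p4) ω))
      * (X (Sum.inr n1) ω * (starRingEnd ℂ) (X (Sum.inr n2) ω)
        * X (Sum.inr n3) ω * (starRingEnd ℂ) (X (Sum.inr n4) ω))) := by
    funext ω
    rw [Fintype.prod_sum_type]
    simp only [Sum.elim_inl, Sum.elim_inr]
    rw [prod_four (fun p => X (Sum.inl p) ω) (fun p => (starRingEnd ℂ) (X (Sum.inl p) ω)) p1 p3 p2 p4,
      prod_four (fun n => X (Sum.inr n) ω) (fun n => (starRingEnd ℂ) (X (Sum.inr n) ω)) n1 n3 n2 n4]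
    ring
  constructor
  · exact hpt ▸ H.1
  · have hv : (∏ i, cmom
        (Sum.elim (fun p => (if p1 = p then 1 else 0) + (if p3 = p then 1 else 0))
          (fun n => (if n1 = n then 1 else 0) + (if n3 = n then 1 else 0)) i)
        (Sum.elim (fun p => (if p2 = p then 1 else 0) + (if p4 = p then 1 else 0))
          (fun n => (if n2 = n then 1 else 0) + (if n4 = n then 1 else 0)) i))
        = ((if p1 = p2 then (1:ℂ) else 0) * (if p3 = p4 then 1 else 0)
          + (if p1 = p4 then 1 else 0) * (if p2 = p3 then 1 else 0))
        * ((if n1 = n2 then (1:ℂ) else 0) * (if n3 = n4 then 1 else 0)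
          + (if n1 = n4 then 1 else 0) * (if n2 = n3 then 1 else 0)) := by
      rw [Fintype.prod_sum_type]
      simp only [Sum.elim_inl, Sum.elim_inr]
      rw [core cmom cm00 cm11 cm22 cm10 cm01 cm20 p1 p2 p3 p4,
        core cmom cm00 cm11 cm22 cm10 cm01 cm20 n1 n2 n3 n4]
    rw [← hpt, H.2, hv]

lemma final_sum (N M : ℕ) :
    (∑ m : Fin M, ∑ m' : Fin M, ∑ n1 : Fin N, ∑ n2 : Fin N, ∑ n3 : Fin N, ∑ n4 : Fin N,
      (((if (n1, m) = (n2, m) then (1:ℂ) else 0) * (if (n3, m') = (n4, m') then 1 else 0)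
        + (if (n1, m) = (n4, m') then 1 else 0) * (if (n2, m) = (n3, m') then 1 else 0)) *
       ((if n1 = n2 then (1:ℂ) else 0) * (if n3 = n4 then 1 else 0)
        + (if n1 = n4 then 1 else 0) * (if n2 = n3 then 1 else 0))))
    = ((M:ℂ)^2 + M) * ((N:ℂ)^2 + N) := by
  have hsplit : ∀ (m m' : Fin M) (n1 n2 n3 n4 : Fin N),
      (((if (n1, m) = (n2, m) then (1:ℂ) else 0) * (if (n3, m') = (n4, m') then 1 else 0)
        + (if (n1, m) = (n4, m') then 1 else 0) * (if (n2, m) = (n3, m') then 1 else 0)) *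
       ((if n1 = n2 then (1:ℂ) else 0) * (if n3 = n4 then 1 else 0)
        + (if n1 = n4 then 1 else 0) * (if n2 = n3 then 1 else 0)))
      = (if n1 = n2 then (1:ℂ) else 0) * (if n3 = n4 then 1 else 0)
        + (if n1 = n2 then (1:ℂ) else 0) * (if n3 = n4 then 1 else 0)
            * ((if n1 = n4 then 1 else 0) * (if n2 = n3 then 1 else 0))
        + (if m = m' then (1:ℂ) else 0) * ((if n1 = n4 then 1 else 0) * (if n2 = n3 then 1 else 0))
            * ((if n1 = n2 then 1 else 0) * (if n3 = n4 then 1 else 0))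
        + (if m = m' then (1:ℂ) else 0) * ((if n1 = n4 then 1 else 0) * (if n2 = n3 then 1 else 0)) := by
    intro m m' n1 n2 n3 n4
    simp only [Prod.mk.injEq, eq_self_iff_true, and_true, ite_and]
    split_ifs <;> ring
  simp only [hsplit]
  simp only [Finset.sum_add_distrib]
  simp [mul_ite, ite_mul, mul_zero, zero_mul, mul_one, one_mul,
    Finset.sum_ite_eq, Finset.sum_ite_eq', Finset.sum_const, Finset.card_univ,
    nsmul_eq_mul, mul_add, add_mul, Finset.mul_sum, Finset.sum_mul]
  push_cast
  ring

end CG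
end CGaux

/-- For a random `N × M` complex matrix `G` and an independent random vector `h ∈ ℂ^N`,
all of whose entries are (jointly) mutually independent `CN(0,1)`,
`E[‖Gᵀ h‖⁴] = (M² + M)(N² + N)`, where `(Gᵀ h)_m = Σ_n G n m * h n`. -/
theorem expectation_norm_pow_four_cascaded_gaussian
    {N M : ℕ} (hN : 0 < N) (hM : 0 < M)
    {Ω : Type*} [MeasurableSpace Ω] (μ : Measure Ω) [IsProbabilityMeasure μ]
    (G : Ω → Matrix (Fin N) (Fin M) ℂ) (h : Ω → Fin N → ℂ)
    (hmeasG : ∀ n m, Measurable fun ω => G ω n m)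
    (hmeash : ∀ n, Measurable fun ω => h ω n)
    (hindep : iIndepFun
      (Sum.elim (fun (p : Fin N × Fin M) => fun ω => G ω p.1 p.2)
        (fun (n : Fin N) => fun ω => h ω n)) μ)
    (hdistG : ∀ n m, Measure.map (fun ω => G ω n m) μ = stdComplexGaussian)
    (hdisth : ∀ n, Measure.map (fun ω => h ω n) μ = stdComplexGaussian) :
    (∫ ω, (∑ m, ‖∑ n, G ω n m * h ω n‖ ^ 2) ^ 2 ∂μ)
      = ((M : ℝ) ^ 2 + M) * ((N : ℝ) ^ 2 + N) := by
  classical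
  have hXmeas : ∀ i, Measurable ((Sum.elim (fun (p : Fin N × Fin M) => fun ω => G ω p.1 p.2)
      (fun (n : Fin N) => fun ω => h ω n)) i) := by
    rintro (⟨n, m⟩ | n)
    · exact hmeasG n m
    · exact hmeash n
  have hXlaw : ∀ i, Measure.map ((Sum.elim (fun (p : Fin N × Fin M) => fun ω => G ω p.1 p.2)
      (fun (n : Fin N) => fun ω => h ω n)) i) μ = stdComplexGaussian := by
    rintro (⟨n, m⟩ | n)
    · exact hdistG n m
    · exact hdisth n
  have key : ∀ (m m' : Fin M) (n1 n2 n3 n4 : Fin N),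
      Integrable (fun ω => (G ω n1 m * (starRingEnd ℂ) (G ω n2 m) * G ω n3 m' * (starRingEnd ℂ) (G ω n4 m')) * (h ω n1 * (starRingEnd ℂ) (h ω n2) * h ω n3 * (starRingEnd ℂ) (h ω n4))) μ ∧
      ∫ ω, (G ω n1 m * (starRingEnd ℂ) (G ω n2 m) * G ω n3 m' * (starRingEnd ℂ) (G ω n4 m')) * (h ω n1 * (starRingEnd ℂ) (h ω n2) * h ω n3 * (starRingEnd ℂ) (h ω n4)) ∂μ = ((if (n1, m) = (n2, m) then (1:ℂ) else 0) * (if (n3, m') = (n4, m') then 1 else 0) + (if (n1, m) = (n4, m') then 1 else 0) * (if (n2, m) = (n3, m') then 1 else 0)) * ((if n1 = n2 then (1:ℂ) else 0) * (if n3 = n4 then 1 else 0) + (if n1 = n4 then 1 else 0) * (if n2 = n3 then 1 else 0)) := by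
    intro m m' n1 n2 n3 n4
    have hk := CG.key8 hXmeas hindep hXlaw (n1, m) (n2, m) (n3, m') (n4, m') n1 n2 n3 n4
    simpa only [Sum.elim_inl, Sum.elim_inr] using hk
  have hz : ∀ z : ℂ, ((‖z‖ : ℝ) : ℂ) ^ 2 = z * (starRingEnd ℂ) z := by
    intro z
    rw [← Complex.ofReal_pow, Complex.sq_norm, Complex.mul_conj]
  have hC : ∫ ω, ((((∑ m, ‖∑ n, G ω n m * h ω n‖ ^ 2) ^ 2 : ℝ)) : ℂ) ∂μ
      = ((M:ℂ)^2 + M) * ((N:ℂ)^2 + N) := by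
    have hrepr : (fun ω => ((((∑ m, ‖∑ n, G ω n m * h ω n‖ ^ 2) ^ 2 : ℝ)) : ℂ))
        = (fun ω => ∑ m, ∑ m', ∑ n1, ∑ n2, ∑ n3, ∑ n4, (G ω n1 m * (starRingEnd ℂ) (G ω n2 m) * G ω n3 m' * (starRingEnd ℂ) (G ω n4 m')) * (h ω n1 * (starRingEnd ℂ) (h ω n2) * h ω n3 * (starRingEnd ℂ) (h ω n4))) := by
      funext ω
      push_cast
      calc (∑ m, ((‖∑ n, G ω n m * h ω n‖ : ℝ) : ℂ) ^ 2) ^ 2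
          = (∑ m, ((∑ n, G ω n m * h ω n) * (starRingEnd ℂ) (∑ n, G ω n m * h ω n))) ^ 2 := by
            rw [Finset.sum_congr rfl (fun m _ => hz _)]
        _ = ∑ m, ∑ m', ((∑ n, G ω n m * h ω n) * (starRingEnd ℂ) (∑ n, G ω n m * h ω n))
              * ((∑ n, G ω n m' * h ω n) * (starRingEnd ℂ) (∑ n, G ω n m' * h ω n)) := by
            rw [sq, Finset.sum_mul_sum]
        _ = _ := Finset.sum_congr rfl fun m _ => Finset.sum_congr rfl fun m' _ => by
            rw [map_sum, map_sum, CG.sum4]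
            exact Finset.sum_congr rfl fun n1 _ => Finset.sum_congr rfl fun n2 _ =>
              Finset.sum_congr rfl fun n3 _ => Finset.sum_congr rfl fun n4 _ => by
                rw [_root_.map_mul, _root_.map_mul]; ring
    rw [hrepr]
    have hI0 : ∀ (m m' : Fin M) (n1 n2 n3 n4 : Fin N), Integrable (fun ω => (G ω n1 m * (starRingEnd ℂ) (G ω n2 m) * G ω n3 m' * (starRingEnd ℂ) (G ω n4 m')) * (h ω n1 * (starRingEnd ℂ) (h ω n2) * h ω n3 * (starRingEnd ℂ) (h ω n4))) μ :=
      fun m m' n1 n2 n3 n4 => (key m m' n1 n2 n3 n4).1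
    have hI1 : ∀ (m m' : Fin M) (n1 n2 n3 : Fin N),
        Integrable (fun ω => ∑ n4, (G ω n1 m * (starRingEnd ℂ) (G ω n2 m) * G ω n3 m' * (starRingEnd ℂ) (G ω n4 m')) * (h ω n1 * (starRingEnd ℂ) (h ω n2) * h ω n3 * (starRingEnd ℂ) (h ω n4))) μ :=
      fun m m' n1 n2 n3 => integrable_finset_sum _ fun n4 _ => hI0 m m' n1 n2 n3 n4
    have hI2 : ∀ (m m' : Fin M) (n1 n2 : Fin N),
        Integrable (fun ω => ∑ n3, ∑ n4, (G ω n1 m * (starRingEnd ℂ) (G ω n2 m) * G ω n3 m' * (starRingEnd ℂ) (G ω n4 m')) * (h ω n1 * (starRingEnd ℂ) (h ω n2) * h ω n3 * (starRingEnd ℂ) (h ω n4))) μ :=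
      fun m m' n1 n2 => integrable_finset_sum _ fun n3 _ => hI1 m m' n1 n2 n3
    have hI3 : ∀ (m m' : Fin M) (n1 : Fin N),
        Integrable (fun ω => ∑ n2, ∑ n3, ∑ n4, (G ω n1 m * (starRingEnd ℂ) (G ω n2 m) * G ω n3 m' * (starRingEnd ℂ) (G ω n4 m')) * (h ω n1 * (starRingEnd ℂ) (h ω n2) * h ω n3 * (starRingEnd ℂ) (h ω n4))) μ :=
      fun m m' n1 => integrable_finset_sum _ fun n2 _ => hI2 m m' n1 n2
    have hI4 : ∀ (m m' : Fin M),
        Integrable (fun ω => ∑ n1, ∑ n2, ∑ n3, ∑ n4, (G ω n1 m * (starRingEnd ℂ) (G ω n2 m) * G ω n3 m' * (starRingEnd ℂ) (G ω n4 m')) * (h ω n1 * (starRingEnd ℂ) (h ω n2) * h ω n3 * (starRingEnd ℂ) (h ω n4))) μ :=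
      fun m m' => integrable_finset_sum _ fun n1 _ => hI3 m m' n1
    have hI5 : ∀ (m : Fin M),
        Integrable (fun ω => ∑ m', ∑ n1, ∑ n2, ∑ n3, ∑ n4, (G ω n1 m * (starRingEnd ℂ) (G ω n2 m) * G ω n3 m' * (starRingEnd ℂ) (G ω n4 m')) * (h ω n1 * (starRingEnd ℂ) (h ω n2) * h ω n3 * (starRingEnd ℂ) (h ω n4))) μ :=
      fun m => integrable_finset_sum _ fun m' _ => hI4 m m'
    calc ∫ ω, ∑ m, ∑ m', ∑ n1, ∑ n2, ∑ n3, ∑ n4, (G ω n1 m * (starRingEnd ℂ) (G ω n2 m) * G ω n3 m' * (starRingEnd ℂ) (G ω n4 m')) * (h ω n1 * (starRingEnd ℂ) (h ω n2) * h ω n3 * (starRingEnd ℂ) (h ω n4)) ∂μ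
        = ∑ m, ∫ ω, ∑ m', ∑ n1, ∑ n2, ∑ n3, ∑ n4, (G ω n1 m * (starRingEnd ℂ) (G ω n2 m) * G ω n3 m' * (starRingEnd ℂ) (G ω n4 m')) * (h ω n1 * (starRingEnd ℂ) (h ω n2) * h ω n3 * (starRingEnd ℂ) (h ω n4)) ∂μ :=
          integral_finset_sum _ fun m _ => hI5 m
      _ = ∑ m, ∑ m', ∑ n1, ∑ n2, ∑ n3, ∑ n4, ∫ ω, (G ω n1 m * (starRingEnd ℂ) (G ω n2 m) * G ω n3 m' * (starRingEnd ℂ) (G ω n4 m')) * (h ω n1 * (starRingEnd ℂ) (h ω n2) * h ω n3 * (starRingEnd ℂ) (h ω n4)) ∂μ := by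
          refine Finset.sum_congr rfl fun m _ => ?_
          rw [integral_finset_sum _ fun m' _ => hI4 m m']
          refine Finset.sum_congr rfl fun m' _ => ?_
          rw [integral_finset_sum _ fun n1 _ => hI3 m m' n1]
          refine Finset.sum_congr rfl fun n1 _ => ?_
          rw [integral_finset_sum _ fun n2 _ => hI2 m m' n1 n2]
          refine Finset.sum_congr rfl fun n2 _ => ?_
          rw [integral_finset_sum _ fun n3 _ => hI1 m m' n1 n2 n3]
          refine Finset.sum_congr rfl fun n3 _ => ?_
          rw [integral_finset_sum _ fun n4 _ => hI0 m m' n1 n2 n3 n4]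
      _ = ∑ m : Fin M, ∑ m' : Fin M, ∑ n1 : Fin N, ∑ n2 : Fin N, ∑ n3 : Fin N, ∑ n4 : Fin N, ((if (n1, m) = (n2, m) then (1:ℂ) else 0) * (if (n3, m') = (n4, m') then 1 else 0) + (if (n1, m) = (n4, m') then 1 else 0) * (if (n2, m) = (n3, m') then 1 else 0)) * ((if n1 = n2 then (1:ℂ) else 0) * (if n3 = n4 then 1 else 0) + (if n1 = n4 then 1 else 0) * (if n2 = n3 then 1 else 0)) := by
          exact Finset.sum_congr rfl fun m _ => Finset.sum_congr rfl fun m' _ =>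
            Finset.sum_congr rfl fun n1 _ => Finset.sum_congr rfl fun n2 _ =>
              Finset.sum_congr rfl fun n3 _ => Finset.sum_congr rfl fun n4 _ =>
                (key m m' n1 n2 n3 n4).2
      _ = ((M:ℂ)^2 + M) * ((N:ℂ)^2 + N) := CG.final_sum N M
  have hcast : ((∫ ω, (∑ m, ‖∑ n, G ω n m * h ω n‖ ^ 2) ^ 2 ∂μ : ℝ) : ℂ)
      = ((M:ℂ)^2 + M) * ((N:ℂ)^2 + N) := by
    rw [show ((∫ ω, (∑ m, ‖∑ n, G ω n m * h ω n‖ ^ 2) ^ 2 ∂μ : ℝ) : ℂ)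
        = (RCLike.ofReal (∫ ω, (∑ m, ‖∑ n, G ω n m * h ω n‖ ^ 2) ^ 2 ∂μ) : ℂ) from rfl,
      ← integral_ofReal]
    exact hC
  exact_mod_cast hcast
end

section
/- For every real γ ≥ 0 and every real ε ≥ 0, log(1 + ε) − ε + (1 + ε)·γ/(1 + γ) ≤ log(1 + γ) (natural logarithm), with equality if and only if ε = γ. Consequently, for fixed γ ≥ 0 the function ε ↦ log(1 + ε) − ε + (1 + ε)γ/(1 + γ) on [0, ∞) attains its maximum value log(1 + γ) uniquely at ε = γ. -/
/-- Lagrangian dual transform (Section IV-C, Eq. (27)): for `γ, ε ≥ 0`,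
`log(1+ε) − ε + (1+ε)γ/(1+γ) ≤ log(1+γ)`, with equality iff `ε = γ`.
Consequently the function of `ε` attains its maximum `log(1+γ)` uniquely at `ε = γ`. -/
theorem lagrangian_dual_transform (γ ε : ℝ) (hγ : 0 ≤ γ) (hε : 0 ≤ ε) :
    Real.log (1 + ε) - ε + (1 + ε) * γ / (1 + γ) ≤ Real.log (1 + γ) ∧
      (Real.log (1 + ε) - ε + (1 + ε) * γ / (1 + γ) = Real.log (1 + γ) ↔ ε = γ) := by
  have h1 : (0:ℝ) < 1 + γ := by linarith
  have h2 : (0:ℝ) < 1 + ε := by linarith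
  have hx : (0:ℝ) < (1 + ε) / (1 + γ) := div_pos h2 h1
  have hlog : Real.log ((1 + ε) / (1 + γ)) = Real.log (1 + ε) - Real.log (1 + γ) :=
    Real.log_div (ne_of_gt h2) (ne_of_gt h1)
  have hx1 : (1 + ε) / (1 + γ) - 1 = ε - (1 + ε) * γ / (1 + γ) := by
    field_simp
    ring
  constructor
  · have := Real.log_le_sub_one_of_pos hx
    rw [hlog, hx1] at this
    linarith
  · constructor
    · intro h
      by_contra hne
      have hxne : (1 + ε) / (1 + γ) ≠ 1 := by
        intro hc
        apply hne
        have := (div_eq_one_iff_eq (ne_of_gt h1)).mp hc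
        linarith
      have := Real.log_lt_sub_one_of_pos hx hxne
      rw [hlog, hx1] at this
      linarith
    · intro h
      subst h
      field_simp
      ring
end
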